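/- Let k ≥ 2 be an integer, σ > 0, b ≥ 0, D_k > 0, and C_k > 0 be reals. Let the higher-priority tasks be partitioned into hp_1 (those with period T_i < D_k) and hp_2 (those with T_i ≥ D_k), each task having period T_i > 0, execution time C_i > 0, and utilization U_i = C_i/T_i. Set C_k' = C_k + Σ_{τ_i ∈ hp_2} σ·(1+b)·C_i. If σ·Σ_{τ_i ∈ hp_1} U_i ≤ ln( (2+b)/(C_k'/D_k + 1 + b) ), then there exists t with 0 < t ≤ D_k such that C_k + Σ_{τ_i ∈ hp_1 ∪ hp_2} σ·(⌈t/T_i⌉·C_i + b·C_i) ≤ t. -/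

import Mathlib

open Finset

set_option maxHeartbeats 1000000

theorem constant_inflation_logarithmic_test
    {ι : Type*} [DecidableEq ι]
    (k : ℕ) (hk : 2 ≤ k) (σ b Dk Ck : ℝ)
    (hσ : 0 < σ) (hb : 0 ≤ b) (hDk : 0 < Dk) (hCk : 0 < Ck)
    (hp1 hp2 : Finset ι) (hdisj : Disjoint hp1 hp2)
    (hcard : hp1.card + hp2.card = k - 1)
    (T C U : ι → ℝ)
    (hT : ∀ i ∈ hp1 ∪ hp2, 0 < T i)
    (hC : ∀ i ∈ hp1 ∪ hp2, 0 < C i)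
    (hU : ∀ i ∈ hp1 ∪ hp2, U i = C i / T i)
    (h1 : ∀ i ∈ hp1, T i < Dk)
    (h2 : ∀ i ∈ hp2, Dk ≤ T i)
    (Ck' : ℝ) (hCk' : Ck' = Ck + ∑ i ∈ hp2, σ * (1 + b) * C i)
    (hcond : σ * ∑ i ∈ hp1, U i ≤ Real.log ((2 + b) / (Ck' / Dk + 1 + b))) :
    ∃ t : ℝ, 0 < t ∧ t ≤ Dk ∧
      Ck + ∑ i ∈ hp1 ∪ hp2, σ * ((⌈t / T i⌉ : ℝ) * C i + b * C i) ≤ t := by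
  classical
  by_contra hcon
  push_neg at hcon
  set tt : ι → ℝ := fun i => (⌊Dk / T i⌋₊ : ℝ) * T i with htt_def
  -- basic facts
  have hT1 : ∀ i ∈ hp1, 0 < T i := fun i hi => hT i (mem_union_left _ hi)
  have hC1 : ∀ i ∈ hp1, 0 < C i := fun i hi => hC i (mem_union_left _ hi)
  have hU1 : ∀ i ∈ hp1, 0 < U i := fun i hi => by
    rw [hU i (mem_union_left _ hi)]; exact div_pos (hC1 i hi) (hT1 i hi)
  have hu1 : ∀ i ∈ hp1, 0 < σ * U i := fun i hi => mul_pos hσ (hU1 i hi)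
  have hfloor1 : ∀ i ∈ hp1, (1 : ℝ) ≤ (⌊Dk / T i⌋₊ : ℝ) := by
    intro i hi
    have : (1 : ℕ) ≤ ⌊Dk / T i⌋₊ := by
      apply Nat.le_floor
      rw [Nat.cast_one, le_div_iff₀ (hT1 i hi)]
      linarith [h1 i hi]
    exact_mod_cast this
  have hTle : ∀ i ∈ hp1, T i ≤ tt i := by
    intro i hi
    have := hfloor1 i hi
    simp only [htt_def]
    nlinarith [hT1 i hi]
  have httpos : ∀ i ∈ hp1, 0 < tt i := fun i hi => lt_of_lt_of_le (hT1 i hi) (hTle i hi)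
  have httle : ∀ i ∈ hp1, tt i ≤ Dk := by
    intro i hi
    have h := Nat.floor_le (le_of_lt (div_pos hDk (hT1 i hi)))
    simp only [htt_def]
    rw [← le_div_iff₀ (hT1 i hi)]
    exact h
  -- the inflated utilization sum constant
  set S' : ℝ := ∑ i ∈ hp1, (1 + b) * (σ * U i * tt i) with hS'_def
  have hb1 : (0:ℝ) < 1 + b := by linarith
  have hS'0 : 0 ≤ S' := by
    apply Finset.sum_nonneg
    intro i hi
    have := hu1 i hi; have := httpos i hi
    positivity
  have hCk'pos : 0 < Ck' := by
    rw [hCk']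
    have : 0 ≤ ∑ i ∈ hp2, σ * (1 + b) * C i := by
      apply Finset.sum_nonneg
      intro i hi
      have := hC i (mem_union_right _ hi)
      positivity
    linarith
  set K : ℝ := Ck' + S' with hK_def
  have hKpos : 0 < K := by positivity
  -- per-term bound on the demand for hp1 tasks
  have hterm : ∀ i ∈ hp1, ∀ c : ℝ, 0 < c → c ≤ Dk →
      σ * ((⌈c / T i⌉ : ℝ) * C i + b * C i) ≤
        (1 + b) * (σ * U i * tt i) + (if tt i < c then σ * C i else 0) := by
    intro i hi c hc0 hcD
    have hTi := hT1 i hi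
    have hCi := hC1 i hi
    have hn1 := hfloor1 i hi
    have hui : σ * U i * tt i = σ * ((⌊Dk / T i⌋₊ : ℝ) * C i) := by
      simp only [htt_def]
      rw [hU i (mem_union_left _ hi)]
      field_simp
    rw [hui]
    by_cases hcase : tt i < c
    · rw [if_pos hcase]
      have hceil : (⌈c / T i⌉ : ℝ) ≤ (⌊Dk / T i⌋₊ : ℝ) + 1 := by
        have hz : (⌈c / T i⌉ : ℤ) ≤ (⌊Dk / T i⌋₊ : ℤ) + 1 := by
          apply Int.ceil_le.2
          push_cast
          have hdd : c / T i ≤ Dk / T i := by gcongr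
          linarith [Nat.lt_floor_add_one (Dk / T i)]
        exact_mod_cast hz
      nlinarith [mul_nonneg (mul_pos hσ hCi).le (sub_nonneg.2 hceil),
        mul_nonneg (mul_nonneg hb (mul_pos hσ hCi).le) (sub_nonneg.2 hn1)]
    · rw [if_neg hcase]
      have hceil : (⌈c / T i⌉ : ℝ) ≤ (⌊Dk / T i⌋₊ : ℝ) := by
        have hz : (⌈c / T i⌉ : ℤ) ≤ (⌊Dk / T i⌋₊ : ℤ) := by
          apply Int.ceil_le.2
          push_cast
          rw [div_le_iff₀ hTi]
          have := not_lt.1 hcase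
          simpa [htt_def] using this
        exact_mod_cast hz
      nlinarith [mul_nonneg (mul_pos hσ hCi).le (sub_nonneg.2 hceil),
        mul_nonneg (mul_nonneg hb (mul_pos hσ hCi).le) (sub_nonneg.2 hn1)]
  -- failure at every candidate point
  have Hfail : ∀ c : ℝ, 0 < c → c ≤ Dk →
      c < K + σ * ∑ i ∈ hp1.filter (fun j => tt j < c), C i := by
    intro c hc0 hcD
    have h := hcon c hc0 hcD
    refine lt_of_lt_of_le h ?_
    rw [Finset.sum_union hdisj]
    have e2 : ∑ i ∈ hp2, σ * ((⌈c / T i⌉ : ℝ) * C i + b * C i)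
        = ∑ i ∈ hp2, σ * (1 + b) * C i := by
      apply Finset.sum_congr rfl
      intro i hi
      have hTi := hT i (mem_union_right _ hi)
      have hone : (⌈c / T i⌉ : ℤ) = 1 := by
        have hpos : 0 < (⌈c / T i⌉ : ℤ) := Int.ceil_pos.2 (div_pos hc0 hTi)
        have hle : (⌈c / T i⌉ : ℤ) ≤ 1 := by
          apply Int.ceil_le.2
          push_cast
          rw [div_le_one hTi]
          exact hcD.trans (h2 i hi)
        omega
      have : ((⌈c / T i⌉ : ℤ) : ℝ) = 1 := by exact_mod_cast hone
      rw [this]; ring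
    have e1 : ∑ i ∈ hp1, σ * ((⌈c / T i⌉ : ℝ) * C i + b * C i)
        ≤ ∑ i ∈ hp1, ((1 + b) * (σ * U i * tt i) + (if tt i < c then σ * C i else 0)) :=
      Finset.sum_le_sum (fun i hi => hterm i hi c hc0 hcD)
    rw [Finset.sum_add_distrib] at e1
    have e3 : ∑ i ∈ hp1, (if tt i < c then σ * C i else 0)
        = σ * ∑ i ∈ hp1.filter (fun j => tt j < c), C i := by
      rw [Finset.mul_sum, Finset.sum_filter]
    rw [e3] at e1
    rw [e2, hK_def, hCk', hS'_def]
    linarith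
  -- products of factors ≥ 1 are ≥ 1
  have one_le_prod : ∀ t : Finset ι, t ⊆ hp1 → (1:ℝ) ≤ ∏ i ∈ t, (1 + σ * U i) := by
    intro t ht
    calc (1:ℝ) = ∏ _i ∈ t, (1:ℝ) := by simp
      _ ≤ ∏ i ∈ t, (1 + σ * U i) :=
        Finset.prod_le_prod (by intros; norm_num) (fun i hi => by linarith [hu1 i (ht hi)])
  -- Claim A: pile-up bound on downward-closed sets
  have claimA : ∀ (m : ℕ) (s : Finset ι), s.card = m → s ⊆ hp1 →
      (∀ j ∈ hp1, ∀ i ∈ s, tt j < tt i → j ∈ s) →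
      K + σ * ∑ i ∈ s, C i ≤ K * ∏ i ∈ s, (1 + σ * U i) := by
    intro m
    induction m with
    | zero =>
      intro s hs _ _
      rw [Finset.card_eq_zero] at hs
      subst hs
      simp
    | succ m ih =>
      intro s hcards hsub hdc
      have hne : s.Nonempty := Finset.card_pos.1 (by omega)
      obtain ⟨i0, hi0s, hmax⟩ := Finset.exists_max_image s tt hne
      have hi0 : i0 ∈ hp1 := hsub hi0s
      have hsub' : s.erase i0 ⊆ hp1 := fun j hj => hsub (Finset.mem_of_mem_erase hj)
      have hdc' : ∀ j ∈ hp1, ∀ i ∈ s.erase i0, tt j < tt i → j ∈ s.erase i0 := by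
        intro j hj i hi hlt
        have his : i ∈ s := Finset.mem_of_mem_erase hi
        have hjs : j ∈ s := hdc j hj i his hlt
        have hji0 : tt j < tt i0 := lt_of_lt_of_le hlt (hmax i his)
        refine Finset.mem_erase.2 ⟨?_, hjs⟩
        rintro rfl
        exact absurd hji0 (lt_irrefl _)
      have hcard' : (s.erase i0).card = m := by
        rw [Finset.card_erase_of_mem hi0s, hcards]
        omega
      have IH := ih (s.erase i0) hcard' hsub' hdc'
      have hfsub : hp1.filter (fun j => tt j < tt i0) ⊆ s.erase i0 := by
        intro j hj
        obtain ⟨hj1, hjlt⟩ := Finset.mem_filter.1 hj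
        refine Finset.mem_erase.2 ⟨?_, hdc j hj1 i0 hi0s hjlt⟩
        rintro rfl
        exact lt_irrefl _ hjlt
      have hfl := Hfail (tt i0) (httpos i0 hi0) (httle i0 hi0)
      have hsum_le : ∑ i ∈ hp1.filter (fun j => tt j < tt i0), C i
          ≤ ∑ i ∈ s.erase i0, C i :=
        Finset.sum_le_sum_of_subset_of_nonneg hfsub
          (fun j hj _ => le_of_lt (hC1 j (hsub' hj)))
      have hCi0 : σ * C i0 ≤ σ * U i0 * tt i0 := by
        have hTi := hT1 i0 hi0
        have : σ * U i0 * T i0 = σ * C i0 := by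
          rw [hU i0 (mem_union_left _ hi0)]; field_simp
        nlinarith [hTle i0 hi0, hu1 i0 hi0]
      have step : σ * U i0 * tt i0
          ≤ σ * U i0 * (K * ∏ i ∈ s.erase i0, (1 + σ * U i)) := by
        apply mul_le_mul_of_nonneg_left _ (hu1 i0 hi0).le
        calc tt i0 ≤ K + σ * ∑ i ∈ hp1.filter (fun j => tt j < tt i0), C i := hfl.le
          _ ≤ K + σ * ∑ i ∈ s.erase i0, C i := by nlinarith
          _ ≤ K * ∏ i ∈ s.erase i0, (1 + σ * U i) := IH
      have hsplit : ∑ i ∈ s, C i = C i0 + ∑ i ∈ s.erase i0, C i :=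
        (Finset.add_sum_erase _ _ hi0s).symm
      have hpsplit : ∏ i ∈ s, (1 + σ * U i)
          = (1 + σ * U i0) * ∏ i ∈ s.erase i0, (1 + σ * U i) :=
        (Finset.mul_prod_erase _ _ hi0s).symm
      rw [hsplit, hpsplit]
      have hfin := hCi0.trans step
      nlinarith [IH]
  -- Claim B: telescoping product bound
  have claimB : ∀ (m : ℕ) (s : Finset ι), s.card = m → s ⊆ hp1 →
      (∀ j ∈ hp1, ∀ i ∈ s, tt j < tt i → j ∈ s) →
      ∑ i ∈ s, (σ * U i) * ∏ j ∈ hp1.filter (fun j => tt j < tt i), (1 + σ * U j)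
        ≤ ∏ i ∈ s, (1 + σ * U i) - 1 := by
    intro m
    induction m with
    | zero =>
      intro s hs _ _
      rw [Finset.card_eq_zero] at hs
      subst hs
      simp
    | succ m ih =>
      intro s hcards hsub hdc
      have hne : s.Nonempty := Finset.card_pos.1 (by omega)
      obtain ⟨i0, hi0s, hmax⟩ := Finset.exists_max_image s tt hne
      have hi0 : i0 ∈ hp1 := hsub hi0s
      have hsub' : s.erase i0 ⊆ hp1 := fun j hj => hsub (Finset.mem_of_mem_erase hj)
      have hdc' : ∀ j ∈ hp1, ∀ i ∈ s.erase i0, tt j < tt i → j ∈ s.erase i0 := by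
        intro j hj i hi hlt
        have his : i ∈ s := Finset.mem_of_mem_erase hi
        have hjs : j ∈ s := hdc j hj i his hlt
        have hji0 : tt j < tt i0 := lt_of_lt_of_le hlt (hmax i his)
        refine Finset.mem_erase.2 ⟨?_, hjs⟩
        rintro rfl
        exact absurd hji0 (lt_irrefl _)
      have hcard' : (s.erase i0).card = m := by
        rw [Finset.card_erase_of_mem hi0s, hcards]
        omega
      have IH := ih (s.erase i0) hcard' hsub' hdc'
      have hfsub : hp1.filter (fun j => tt j < tt i0) ⊆ s.erase i0 := by
        intro j hj
        obtain ⟨hj1, hjlt⟩ := Finset.mem_filter.1 hj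
        refine Finset.mem_erase.2 ⟨?_, hdc j hj1 i0 hi0s hjlt⟩
        rintro rfl
        exact lt_irrefl _ hjlt
      have hprodle : ∏ j ∈ hp1.filter (fun j => tt j < tt i0), (1 + σ * U j)
          ≤ ∏ j ∈ s.erase i0, (1 + σ * U j) := by
        have hsd := Finset.prod_sdiff (f := fun j => 1 + σ * U j) hfsub
        have h1p : (1:ℝ) ≤ ∏ j ∈ (s.erase i0) \ hp1.filter (fun j => tt j < tt i0), (1 + σ * U j) :=
          one_le_prod _ (fun j hj => hsub' (Finset.mem_sdiff.1 hj).1)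
        have h2p : (1:ℝ) ≤ ∏ j ∈ hp1.filter (fun j => tt j < tt i0), (1 + σ * U j) :=
          one_le_prod _ (Finset.filter_subset _ _)
        nlinarith
      have hsplit : ∑ i ∈ s, (σ * U i) * ∏ j ∈ hp1.filter (fun j => tt j < tt i), (1 + σ * U j)
          = (σ * U i0) * ∏ j ∈ hp1.filter (fun j => tt j < tt i0), (1 + σ * U j)
            + ∑ i ∈ s.erase i0, (σ * U i) * ∏ j ∈ hp1.filter (fun j => tt j < tt i), (1 + σ * U j) :=
        (Finset.add_sum_erase s (fun i => (σ * U i) * ∏ j ∈ hp1.filter (fun j => tt j < tt i), (1 + σ * U j)) hi0s).symm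
      have hpsplit : ∏ i ∈ s, (1 + σ * U i)
          = (1 + σ * U i0) * ∏ i ∈ s.erase i0, (1 + σ * U i) :=
        (Finset.mul_prod_erase _ _ hi0s).symm
      rw [hsplit, hpsplit]
      have hmono : (σ * U i0) * ∏ j ∈ hp1.filter (fun j => tt j < tt i0), (1 + σ * U j)
          ≤ (σ * U i0) * ∏ j ∈ s.erase i0, (1 + σ * U j) :=
        mul_le_mul_of_nonneg_left hprodle (hu1 i0 hi0).le
      nlinarith [IH]
  -- trivial downward-closedness of hp1
  have hdc_triv : ∀ j ∈ hp1, ∀ i ∈ hp1, tt j < tt i → j ∈ hp1 := fun j hj _ _ _ => hj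
  set P : ℝ := ∏ i ∈ hp1, (1 + σ * U i) with hP_def
  have hP1 : 1 ≤ P := one_le_prod hp1 Finset.Subset.rfl
  -- consequence 1 : Dk < K * P
  have hA := claimA hp1.card hp1 rfl Finset.Subset.rfl hdc_triv
  have hDkKP : Dk < K * P := by
    have hfl := Hfail Dk hDk le_rfl
    have hsum_le : ∑ i ∈ hp1.filter (fun j => tt j < Dk), C i ≤ ∑ i ∈ hp1, C i :=
      Finset.sum_le_sum_of_subset_of_nonneg (Finset.filter_subset _ _)
        (fun j hj _ => le_of_lt (hC1 j hj))
    nlinarith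
  -- consequence 2 : S' ≤ (1+b) * K * (P - 1)
  have hS'le : S' ≤ (1 + b) * (K * (P - 1)) := by
    have hpt : ∀ i ∈ hp1, (1 + b) * (σ * U i * tt i)
        ≤ (1 + b) * (K * ((σ * U i) * ∏ j ∈ hp1.filter (fun j => tt j < tt i), (1 + σ * U j))) := by
      intro i hi
      apply mul_le_mul_of_nonneg_left _ hb1.le
      have hAi := claimA (hp1.filter (fun j => tt j < tt i)).card
        (hp1.filter (fun j => tt j < tt i)) rfl (Finset.filter_subset _ _)
        (by
          intro j hj i' hi' hlt
          obtain ⟨hi'1, hi'lt⟩ := Finset.mem_filter.1 hi'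
          exact Finset.mem_filter.2 ⟨hj, lt_trans hlt hi'lt⟩)
      have hfl := Hfail (tt i) (httpos i hi) (httle i hi)
      have h1' : tt i ≤ K * ∏ j ∈ hp1.filter (fun j => tt j < tt i), (1 + σ * U j) :=
        hfl.le.trans hAi
      calc σ * U i * tt i ≤ σ * U i * (K * ∏ j ∈ hp1.filter (fun j => tt j < tt i), (1 + σ * U j)) :=
            mul_le_mul_of_nonneg_left h1' (hu1 i hi).le
        _ = K * ((σ * U i) * ∏ j ∈ hp1.filter (fun j => tt j < tt i), (1 + σ * U j)) := by ring
    have hsum := Finset.sum_le_sum hpt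
    rw [hS'_def]
    have hB := claimB hp1.card hp1 rfl Finset.Subset.rfl hdc_triv
    have hfact : ∑ i ∈ hp1, (1 + b) * (K * ((σ * U i) * ∏ j ∈ hp1.filter (fun j => tt j < tt i), (1 + σ * U j)))
        = (1 + b) * K * ∑ i ∈ hp1, (σ * U i) * ∏ j ∈ hp1.filter (fun j => tt j < tt i), (1 + σ * U j) := by
      rw [Finset.mul_sum]
      apply Finset.sum_congr rfl
      intro i _
      ring
    rw [hfact] at hsum
    have : (1 + b) * K * ∑ i ∈ hp1, (σ * U i) * ∏ j ∈ hp1.filter (fun j => tt j < tt i), (1 + σ * U j)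
        ≤ (1 + b) * K * (P - 1) :=
      mul_le_mul_of_nonneg_left hB (by positivity)
    calc S' ≤ _ := hsum
      _ ≤ (1 + b) * K * (P - 1) := this
      _ = (1 + b) * (K * (P - 1)) := by ring
  -- hypothesis implies the hyperbolic bound
  have hd : 0 < Ck' / Dk + 1 + b := by positivity
  have hR : 0 < (2 + b) / (Ck' / Dk + 1 + b) := by positivity
  have hPexp : P ≤ Real.exp (σ * ∑ i ∈ hp1, U i) := by
    have : σ * ∑ i ∈ hp1, U i = ∑ i ∈ hp1, σ * U i := Finset.mul_sum _ _ _
    rw [this, Real.exp_sum]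
    apply Finset.prod_le_prod
    · intro i hi; linarith [hu1 i hi]
    · intro i hi
      have := Real.add_one_le_exp (σ * U i)
      linarith
  have hPR : P ≤ (2 + b) / (Ck' / Dk + 1 + b) := by
    calc P ≤ Real.exp (σ * ∑ i ∈ hp1, U i) := hPexp
      _ ≤ Real.exp (Real.log ((2 + b) / (Ck' / Dk + 1 + b))) := Real.exp_le_exp.2 hcond
      _ = (2 + b) / (Ck' / Dk + 1 + b) := Real.exp_log hR
  have hPd : P * (Ck' / Dk + 1 + b) ≤ 2 + b := (le_div_iff₀ hd).1 hPR
  have hCkP : Ck' * P ≤ Dk * (2 + b - (1 + b) * P) := by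
    have h := mul_le_mul_of_nonneg_right hPd hDk.le
    have hDkne : Dk ≠ 0 := ne_of_gt hDk
    have : P * (Ck' / Dk) * Dk = Ck' * P := by field_simp
    nlinarith [h]
  -- final contradiction
  have hQpos : 0 < 2 + b - (1 + b) * P := by
    have : 0 < Ck' * P := by positivity
    nlinarith
  have hS'Q : S' * (2 + b - (1 + b) * P) ≤ (1 + b) * (P - 1) * Ck' := by
    nlinarith [hS'le]
  have e1 : Dk * (2 + b - (1 + b) * P) < (Ck' + S') * P * (2 + b - (1 + b) * P) := by
    have : K = Ck' + S' := hK_def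
    nlinarith [hDkKP]
  have e2 : S' * (2 + b - (1 + b) * P) * P ≤ (1 + b) * (P - 1) * Ck' * P :=
    mul_le_mul_of_nonneg_right hS'Q (by linarith)
  nlinarith [e1, e2, hCkP]
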